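/- Let d ≥ 1 and let D ⊂ ℝ^d be a nonempty bounded open set. Let 0 < a < d and set b = a and ϱ = −a. Then there exists a constant C = C(d, a) such that for all x, y ∈ D with x ≠ y: ∫_D ∫_D |y−z|^{a−d} |z−w|^{−a} |w−x|^{a−d} dz dw ≤ C (diam(D))^a (1 + log(diam(D)/|x−y|)). -/

import Mathlib

open MeasureTheory Metric ENNReal

variable {d : ℕ}

local notation "E" d => EuclideanSpace ℝ (Fin d)

/-- The geometric constant. -/
noncomputable def rieszK (d : ℕ) (q : ℝ) : ℝ≥0∞ :=
  volume (ball (0 : E d) 1) * ENNReal.ofReal ((2:ℝ) ^ (d:ℝ))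
    * (1 - ENNReal.ofReal ((2:ℝ) ^ (-q)))⁻¹

lemma rieszK_ne_top {q : ℝ} (hq : 0 < q) : rieszK d q ≠ ⊤ := by
  have h1 : ENNReal.ofReal ((2:ℝ) ^ (-q)) < 1 := by
    exact ENNReal.ofReal_lt_one.mpr (Real.rpow_lt_one_of_one_lt_of_neg one_lt_two (neg_neg_of_pos hq))
  refine ENNReal.mul_ne_top (ENNReal.mul_ne_top ?_ ofReal_ne_top) ?_
  · exact measure_ball_lt_top.ne
  · rw [Ne, ENNReal.inv_eq_top, tsub_eq_zero_iff_le]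
    exact not_le.mpr h1

lemma volume_singleton_eq_zero (hd : 1 ≤ d) (c : E d) :
    volume ({c} : Set (E d)) = 0 := by
  have := Measure.addHaar_closedBall (volume : Measure (E d)) c (le_refl 0)
  rw [closedBall_zero] at this
  rw [this, finrank_euclideanSpace_fin]
  simp [zero_pow (by omega : d ≠ 0)]

lemma half_pow_eq (m : ℕ) : ((1:ℝ)/2)^m = (2:ℝ) ^ (-(m:ℝ)) := by
  rw [Real.rpow_neg (by norm_num), Real.rpow_natCast]
  simp [one_div, inv_pow]

lemma riesz_ball (hd : 1 ≤ d) {q : ℝ} (hq : 0 < q) (hqd : q ≤ d) (c : E d)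
    {r : ℝ} (hr : 0 < r) :
    ∫⁻ z in closedBall c r, ENNReal.ofReal (‖z - c‖ ^ (q - d)) ≤
      rieszK d q * ENNReal.ofReal (r ^ q) := by
  set V := volume (ball (0 : E d) 1) with hV
  set f : (E d) → ℝ≥0∞ := fun z => ENNReal.ofReal (‖z - c‖ ^ (q - d)) with hf
  set A : ℕ → Set (E d) :=
    fun n => {z | r * (1/2:ℝ)^(n+1) < ‖z - c‖ ∧ ‖z - c‖ ≤ r * (1/2:ℝ)^n} with hA
  have cover : closedBall c r ⊆ {c} ∪ ⋃ n, A n := by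
    intro z hz
    rcases eq_or_ne z c with h | h
    · exact Or.inl h
    · refine Or.inr ?_
      have ht : 0 < ‖z - c‖ := by
        rw [norm_pos_iff, sub_ne_zero]; exact h
    -- find n with (1/2)^n < ‖z-c‖/r
      have hex : ∃ n : ℕ, r * (1/2:ℝ)^(n+1) < ‖z - c‖ := by
        obtain ⟨n, hn⟩ := exists_pow_lt_of_lt_one (div_pos ht hr) (by norm_num : (1:ℝ)/2 < 1)
        refine ⟨n, ?_⟩
        have : ((1:ℝ)/2)^(n+1) ≤ (1/2:ℝ)^n :=
          pow_le_pow_of_le_one (by norm_num) (by norm_num) (Nat.le_succ n)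
        have := lt_of_le_of_lt this hn
        calc r * (1/2:ℝ)^(n+1) ≤ r * ((1/2:ℝ)^n) := by nlinarith
          _ < r * (‖z - c‖ / r) := by
              exact mul_lt_mul_of_pos_left hn hr
          _ = ‖z - c‖ := by field_simp
      classical
      let n₀ := Nat.find hex
      refine Set.mem_iUnion.mpr ⟨n₀, Nat.find_spec hex, ?_⟩
      rcases Nat.eq_zero_or_pos n₀ with h0 | hpos
      · simpa [h0] using (mem_closedBall_iff_norm.mp hz)
      · obtain ⟨k, hk⟩ := Nat.exists_eq_succ_of_ne_zero (Nat.pos_iff_ne_zero.mp hpos)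
        have := Nat.find_min hex (m := k) (by omega)
        push_neg at this
        calc ‖z - c‖ ≤ r * (1/2:ℝ)^(k+1) := this
          _ = r * (1/2:ℝ)^n₀ := by rw [hk]
  have singzero : volume ({c} : Set (E d)) = 0 := volume_singleton_eq_zero hd c
  have step1 : ∫⁻ z in closedBall c r, f z ≤ ∑' n, ∫⁻ z in A n, f z := by
    calc ∫⁻ z in closedBall c r, f z ≤ ∫⁻ z in {c} ∪ ⋃ n, A n, f z :=
          lintegral_mono_set cover
      _ ≤ (∫⁻ z in ({c} : Set (E d)), f z) + ∫⁻ z in ⋃ n, A n, f z :=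
          lintegral_union_le _ _ _
      _ = ∫⁻ z in ⋃ n, A n, f z := by
          rw [setLIntegral_measure_zero _ _ singzero, zero_add]
      _ ≤ ∑' n, ∫⁻ z in A n, f z := lintegral_iUnion_le _ _
  have hterm : ∀ n : ℕ, ∫⁻ z in A n, f z ≤
      (V * ENNReal.ofReal ((2:ℝ)^(d:ℝ)) * ENNReal.ofReal (r ^ q)) *
        (ENNReal.ofReal ((2:ℝ)^(-q)))^n := by
    intro n
    have hApos : (0:ℝ) < r * (1/2:ℝ)^(n+1) := by positivity
    have hAmeas : MeasurableSet (A n) := by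
      apply MeasurableSet.inter
      · exact measurableSet_lt measurable_const ((measurable_id.sub_const c).norm)
      · exact measurableSet_le ((measurable_id.sub_const c).norm) measurable_const
    have hb : ∀ z ∈ A n, f z ≤ ENNReal.ofReal ((r * (1/2:ℝ)^(n+1)) ^ (q - d)) := by
      intro z hz
      exact ENNReal.ofReal_le_ofReal
        (Real.rpow_le_rpow_of_nonpos hApos hz.1.le (by linarith))
    have hmono : volume (A n) ≤ ENNReal.ofReal ((r * (1/2:ℝ)^n) ^ (d:ℝ)) * V := by
      have hsub : A n ⊆ closedBall c (r * (1/2:ℝ)^n) := by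
        intro z hz
        exact mem_closedBall_iff_norm.mpr hz.2
      calc volume (A n) ≤ volume (closedBall c (r * (1/2:ℝ)^n)) := measure_mono hsub
        _ = ENNReal.ofReal ((r * (1/2:ℝ)^n) ^ (d:ℝ)) * V := by
            rw [Measure.addHaar_closedBall _ _ (by positivity), finrank_euclideanSpace_fin,
              ← Real.rpow_natCast (r * (1/2:ℝ)^n) d]
    calc ∫⁻ z in A n, f z
        ≤ ∫⁻ _ in A n, ENNReal.ofReal ((r * (1/2:ℝ)^(n+1)) ^ (q - d)) :=
          setLIntegral_mono' hAmeas hb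
      _ = ENNReal.ofReal ((r * (1/2:ℝ)^(n+1)) ^ (q - d)) * volume (A n) :=
          setLIntegral_const _ _
      _ ≤ ENNReal.ofReal ((r * (1/2:ℝ)^(n+1)) ^ (q - d)) *
            (ENNReal.ofReal ((r * (1/2:ℝ)^n) ^ (d:ℝ)) * V) := by
          exact mul_le_mul_right hmono _
      _ = ENNReal.ofReal ((r * (1/2:ℝ)^(n+1)) ^ (q - d) * (r * (1/2:ℝ)^n) ^ (d:ℝ)) * V := by
          rw [ENNReal.ofReal_mul (by positivity)]; ring
      _ ≤ ENNReal.ofReal (r ^ q * ((2:ℝ)^(d:ℝ) * ((2:ℝ)^(-q))^n)) * V := by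
          refine mul_le_mul_left (ENNReal.ofReal_le_ofReal ?_) V
          have h2 : (0:ℝ) ≤ 2 := by norm_num
          have key : (r * (1/2:ℝ)^(n+1)) ^ (q - (d:ℝ)) * (r * (1/2:ℝ)^n) ^ (d:ℝ)
              = r ^ q * (2:ℝ) ^ ((d:ℝ) - q - n*q) := by
            rw [Real.mul_rpow hr.le (by positivity), Real.mul_rpow hr.le (by positivity),
              half_pow_eq, half_pow_eq, ← Real.rpow_mul h2, ← Real.rpow_mul h2,
              mul_mul_mul_comm, ← Real.rpow_add hr,
              ← Real.rpow_add (by norm_num : (0:ℝ) < 2),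
              show q - (d:ℝ) + (d:ℝ) = q by ring]
            congr 1
            push_cast
            ring
          have hmono2 : (2:ℝ)^((d:ℝ) - q - n*q) ≤ (2:ℝ)^((d:ℝ) - n*q) :=
            Real.rpow_le_rpow_of_exponent_le one_le_two (by nlinarith)
          have h2' : (2:ℝ)^((d:ℝ) - n*q) = (2:ℝ)^(d:ℝ) * ((2:ℝ)^(-q))^n := by
            rw [← Real.rpow_natCast ((2:ℝ)^(-q)) n, ← Real.rpow_mul h2,
              ← Real.rpow_add (by norm_num : (0:ℝ) < 2)]
            congr 1; ring
          calc (r * (1/2:ℝ)^(n+1)) ^ (q - (d:ℝ)) * (r * (1/2:ℝ)^n) ^ (d:ℝ)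
              = r ^ q * (2:ℝ) ^ ((d:ℝ) - q - n*q) := key
            _ ≤ r ^ q * (2:ℝ) ^ ((d:ℝ) - n*q) := by
                exact mul_le_mul_of_nonneg_left hmono2 (by positivity)
            _ = r ^ q * ((2:ℝ)^(d:ℝ) * ((2:ℝ)^(-q))^n) := by rw [h2']
      _ = (V * ENNReal.ofReal ((2:ℝ)^(d:ℝ)) * ENNReal.ofReal (r ^ q)) *
            (ENNReal.ofReal ((2:ℝ)^(-q)))^n := by
          rw [ENNReal.ofReal_mul (by positivity), ENNReal.ofReal_mul (by positivity),
            ENNReal.ofReal_pow (by positivity)]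
          ring
  calc ∫⁻ z in closedBall c r, f z ≤ ∑' n, ∫⁻ z in A n, f z := step1
    _ ≤ ∑' n : ℕ, (V * ENNReal.ofReal ((2:ℝ)^(d:ℝ)) * ENNReal.ofReal (r ^ q)) *
          (ENNReal.ofReal ((2:ℝ)^(-q)))^n := ENNReal.tsum_le_tsum hterm
    _ = (V * ENNReal.ofReal ((2:ℝ)^(d:ℝ)) * ENNReal.ofReal (r ^ q)) *
          (1 - ENNReal.ofReal ((2:ℝ)^(-q)))⁻¹ := by
          rw [ENNReal.tsum_mul_left, ENNReal.tsum_geometric]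
    _ = rieszK d q * ENNReal.ofReal (r ^ q) := by
          rw [rieszK]; ring

lemma riesz_ext {q : ℝ} (hq : 0 < q) (c : E d)
    {r : ℝ} (hr : 0 < r) :
    ∫⁻ z in (closedBall c r)ᶜ, ENNReal.ofReal (‖z - c‖ ^ (-q - d)) ≤
      rieszK d q * ENNReal.ofReal (r ^ (-q)) := by
  set V := volume (ball (0 : E d) 1) with hV
  set f : (E d) → ℝ≥0∞ := fun z => ENNReal.ofReal (‖z - c‖ ^ (-q - d)) with hf
  set B : ℕ → Set (E d) :=
    fun n => {z | r * (2:ℝ)^n < ‖z - c‖ ∧ ‖z - c‖ ≤ r * (2:ℝ)^(n+1)} with hB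
  have cover : (closedBall c r)ᶜ ⊆ ⋃ n, B n := by
    intro z hz
    have ht : r < ‖z - c‖ := by
      simpa [mem_closedBall_iff_norm, not_le, dist_eq_norm] using hz
    have hex : ∃ n : ℕ, ‖z - c‖ ≤ r * (2:ℝ)^(n+1) := by
      obtain ⟨n, hn⟩ := pow_unbounded_of_one_lt (‖z - c‖ / r) (by norm_num : (1:ℝ) < 2)
      refine ⟨n, ?_⟩
      have h1 : ‖z - c‖ / r < 2^n := hn
      have h2 : ((2:ℝ))^n ≤ 2^(n+1) := by
        have := pow_le_pow_right₀ (by norm_num : (1:ℝ) ≤ 2) (Nat.le_succ n)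
        exact this
      have := (div_lt_iff₀ hr).mp h1
      nlinarith
    classical
    let n₀ := Nat.find hex
    refine Set.mem_iUnion.mpr ⟨n₀, ?_, Nat.find_spec hex⟩
    rcases Nat.eq_zero_or_pos n₀ with h0 | hpos
    · simpa [h0] using ht
    · obtain ⟨k, hk⟩ := Nat.exists_eq_succ_of_ne_zero (Nat.pos_iff_ne_zero.mp hpos)
      have hm := Nat.find_min hex (m := k) (by omega)
      push_neg at hm
      calc r * (2:ℝ)^n₀ = r * (2:ℝ)^(k+1) := by rw [hk]
        _ < ‖z - c‖ := hm
  have step1 : ∫⁻ z in (closedBall c r)ᶜ, f z ≤ ∑' n, ∫⁻ z in B n, f z :=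
    le_trans (lintegral_mono_set cover) (lintegral_iUnion_le _ _)
  have hterm : ∀ n : ℕ, ∫⁻ z in B n, f z ≤
      (V * ENNReal.ofReal ((2:ℝ)^(d:ℝ)) * ENNReal.ofReal (r ^ (-q))) *
        (ENNReal.ofReal ((2:ℝ)^(-q)))^n := by
    intro n
    have hBpos : (0:ℝ) < r * (2:ℝ)^n := by positivity
    have hBmeas : MeasurableSet (B n) := by
      apply MeasurableSet.inter
      · exact measurableSet_lt measurable_const ((measurable_id.sub_const c).norm)
      · exact measurableSet_le ((measurable_id.sub_const c).norm) measurable_const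
    have hb : ∀ z ∈ B n, f z ≤ ENNReal.ofReal ((r * (2:ℝ)^n) ^ (-q - d)) := by
      intro z hz
      refine ENNReal.ofReal_le_ofReal
        (Real.rpow_le_rpow_of_nonpos hBpos hz.1.le ?_)
      have : (0:ℝ) ≤ (d:ℝ) := Nat.cast_nonneg d
      linarith
    have hmono : volume (B n) ≤ ENNReal.ofReal ((r * (2:ℝ)^(n+1)) ^ (d:ℝ)) * V := by
      have hsub : B n ⊆ closedBall c (r * (2:ℝ)^(n+1)) := fun z hz =>
        mem_closedBall_iff_norm.mpr hz.2
      calc volume (B n) ≤ volume (closedBall c (r * (2:ℝ)^(n+1))) := measure_mono hsub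
        _ = ENNReal.ofReal ((r * (2:ℝ)^(n+1)) ^ (d:ℝ)) * V := by
            rw [Measure.addHaar_closedBall _ _ (by positivity), finrank_euclideanSpace_fin,
              ← Real.rpow_natCast (r * (2:ℝ)^(n+1)) d]
    calc ∫⁻ z in B n, f z
        ≤ ∫⁻ _ in B n, ENNReal.ofReal ((r * (2:ℝ)^n) ^ (-q - d)) :=
          setLIntegral_mono' hBmeas hb
      _ = ENNReal.ofReal ((r * (2:ℝ)^n) ^ (-q - d)) * volume (B n) :=
          setLIntegral_const _ _
      _ ≤ ENNReal.ofReal ((r * (2:ℝ)^n) ^ (-q - d)) *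
            (ENNReal.ofReal ((r * (2:ℝ)^(n+1)) ^ (d:ℝ)) * V) := mul_le_mul_right hmono _
      _ = ENNReal.ofReal ((r * (2:ℝ)^n) ^ (-q - d) * (r * (2:ℝ)^(n+1)) ^ (d:ℝ)) * V := by
          rw [ENNReal.ofReal_mul (by positivity)]; ring
      _ ≤ ENNReal.ofReal (r ^ (-q) * ((2:ℝ)^(d:ℝ) * ((2:ℝ)^(-q))^n)) * V := by
          refine mul_le_mul_left (ENNReal.ofReal_le_ofReal ?_) V
          have h2 : (0:ℝ) ≤ 2 := by norm_num
          have key : (r * (2:ℝ)^n) ^ (-q - (d:ℝ)) * (r * (2:ℝ)^(n+1)) ^ (d:ℝ)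
              = r ^ (-q) * (2:ℝ) ^ ((d:ℝ) - n*q) := by
            rw [Real.mul_rpow hr.le (by positivity), Real.mul_rpow hr.le (by positivity),
              ← Real.rpow_natCast 2 n, ← Real.rpow_natCast 2 (n+1),
              ← Real.rpow_mul h2, ← Real.rpow_mul h2,
              mul_mul_mul_comm, ← Real.rpow_add hr,
              ← Real.rpow_add (by norm_num : (0:ℝ) < 2),
              show -q - (d:ℝ) + (d:ℝ) = -q by ring]
            congr 1
            push_cast
            ring
          have h2' : (2:ℝ)^((d:ℝ) - n*q) = (2:ℝ)^(d:ℝ) * ((2:ℝ)^(-q))^n := by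
            rw [← Real.rpow_natCast ((2:ℝ)^(-q)) n, ← Real.rpow_mul h2,
              ← Real.rpow_add (by norm_num : (0:ℝ) < 2)]
            congr 1; ring
          rw [key, h2']
      _ = (V * ENNReal.ofReal ((2:ℝ)^(d:ℝ)) * ENNReal.ofReal (r ^ (-q))) *
            (ENNReal.ofReal ((2:ℝ)^(-q)))^n := by
          rw [ENNReal.ofReal_mul (by positivity), ENNReal.ofReal_mul (by positivity),
            ENNReal.ofReal_pow (by positivity)]
          ring
  calc ∫⁻ z in (closedBall c r)ᶜ, f z ≤ ∑' n, ∫⁻ z in B n, f z := step1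
    _ ≤ ∑' n : ℕ, (V * ENNReal.ofReal ((2:ℝ)^(d:ℝ)) * ENNReal.ofReal (r ^ (-q))) *
          (ENNReal.ofReal ((2:ℝ)^(-q)))^n := ENNReal.tsum_le_tsum hterm
    _ = (V * ENNReal.ofReal ((2:ℝ)^(d:ℝ)) * ENNReal.ofReal (r ^ (-q))) *
          (1 - ENNReal.ofReal ((2:ℝ)^(-q)))⁻¹ := by
          rw [ENNReal.tsum_mul_left, ENNReal.tsum_geometric]
    _ = rieszK d q * ENNReal.ofReal (r ^ (-q)) := by
          rw [rieszK]; ring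

noncomputable def rieszC1 (d : ℕ) (a : ℝ) : ℝ≥0∞ :=
  rieszK d (a/2) * ENNReal.ofReal ((2:ℝ)^a) + rieszK d (a/2)
    + (rieszK d ((d:ℝ)-a) * ENNReal.ofReal ((2:ℝ)^((d:ℝ)-a/2)) + rieszK d (a/2))

lemma rieszC1_ne_top {a : ℝ} (ha : 0 < a) (had : a < (d:ℝ)) : rieszC1 d a ≠ ⊤ := by
  have h1 := rieszK_ne_top (d := d) (half_pos ha)
  have h2 := rieszK_ne_top (d := d) (q := (d:ℝ) - a) (by linarith)
  rw [rieszC1]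
  refine ENNReal.add_ne_top.mpr ⟨ENNReal.add_ne_top.mpr ⟨?_, h1⟩,
    ENNReal.add_ne_top.mpr ⟨?_, h1⟩⟩
  · exact ENNReal.mul_ne_top h1 ENNReal.ofReal_ne_top
  · exact ENNReal.mul_ne_top h2 ENNReal.ofReal_ne_top

lemma inner_comp (hd : 1 ≤ d) {a : ℝ} (ha : 0 < a) (had : a < (d:ℝ)) (D : Set (E d))
    (y w : E d) (hyw : y ≠ w) :
    ∫⁻ z in D, ENNReal.ofReal (‖y - z‖ ^ (a/2 - (d:ℝ)) * ‖z - w‖ ^ (-a)) ≤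
      rieszC1 d a * ENNReal.ofReal (‖y - w‖ ^ (-(a/2))) := by
  set r := ‖y - w‖ with hrdef
  have hr : 0 < r := by rw [hrdef, norm_pos_iff, sub_ne_zero]; exact hyw
  set F : (E d) → ℝ≥0∞ :=
    fun z => ENNReal.ofReal (‖y - z‖ ^ (a/2 - (d:ℝ)) * ‖z - w‖ ^ (-a)) with hF
  set H : Set (E d) := {z | ‖z - y‖ ≤ ‖z - w‖} with hH
  have hHmeas : MeasurableSet H :=
    measurableSet_le ((measurable_id.sub_const y).norm) ((measurable_id.sub_const w).norm)
  have cover : D ⊆ (H ∩ closedBall y r ∪ H ∩ (closedBall y r)ᶜ) ∪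
      (Hᶜ ∩ closedBall w r ∪ Hᶜ ∩ (closedBall w r)ᶜ) := by
    intro z _
    by_cases h1 : z ∈ H
    · by_cases h2 : z ∈ closedBall y r
      · exact Or.inl (Or.inl ⟨h1, h2⟩)
      · exact Or.inl (Or.inr ⟨h1, h2⟩)
    · by_cases h2 : z ∈ closedBall w r
      · exact Or.inr (Or.inl ⟨h1, h2⟩)
      · exact Or.inr (Or.inr ⟨h1, h2⟩)
  -- piece 1
  have hP1 : ∫⁻ z in H ∩ closedBall y r, F z ≤
      rieszK d (a/2) * ENNReal.ofReal ((2:ℝ)^a) * ENNReal.ofReal (r ^ (-(a/2))) := by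
    have hpt : ∀ z ∈ H ∩ closedBall y r,
        F z ≤ ENNReal.ofReal ((r/2)^(-a) * ‖z - y‖ ^ (a/2 - (d:ℝ))) := by
      rintro z ⟨hzH, _⟩
      have htri := dist_triangle y z w
      rw [dist_eq_norm, dist_eq_norm, dist_eq_norm] at htri
      have hrev := norm_sub_rev y z
      have h1 : r/2 ≤ ‖z - w‖ := by
        have : ‖z - y‖ ≤ ‖z - w‖ := hzH
        rw [hrdef]; linarith
      have h2 : ‖z - w‖ ^ (-a) ≤ (r/2) ^ (-a) :=
        Real.rpow_le_rpow_of_nonpos (by linarith) h1 (by linarith)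
      refine ENNReal.ofReal_le_ofReal ?_
      rw [norm_sub_rev y z]
      calc ‖z - y‖ ^ (a/2 - (d:ℝ)) * ‖z - w‖ ^ (-a)
          ≤ ‖z - y‖ ^ (a/2 - (d:ℝ)) * (r/2) ^ (-a) :=
            mul_le_mul_of_nonneg_left h2 (Real.rpow_nonneg (norm_nonneg _) _)
        _ = (r/2)^(-a) * ‖z - y‖ ^ (a/2 - (d:ℝ)) := mul_comm _ _
    have hid1 : (r/2)^(-a) * r^(a/2) = (2:ℝ)^a * r^(-(a/2)) := by
      have h2a : ((2:ℝ)⁻¹) ^ (-a) = (2:ℝ)^a := by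
        rw [Real.inv_rpow (by norm_num), ← Real.rpow_neg (by norm_num), neg_neg]
      rw [show r/2 = r * 2⁻¹ by ring, Real.mul_rpow hr.le (by norm_num), h2a,
        mul_right_comm, ← Real.rpow_add hr,
        show -a + a/2 = -(a/2) by ring, mul_comm]
    calc ∫⁻ z in H ∩ closedBall y r, F z
        ≤ ∫⁻ z in H ∩ closedBall y r, ENNReal.ofReal ((r/2)^(-a) * ‖z - y‖ ^ (a/2 - (d:ℝ))) :=
          setLIntegral_mono' (hHmeas.inter measurableSet_closedBall) hpt
      _ ≤ ∫⁻ z in closedBall y r, ENNReal.ofReal ((r/2)^(-a) * ‖z - y‖ ^ (a/2 - (d:ℝ))) :=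
          lintegral_mono_set Set.inter_subset_right
      _ = ENNReal.ofReal ((r/2)^(-a)) *
            ∫⁻ z in closedBall y r, ENNReal.ofReal (‖z - y‖ ^ (a/2 - (d:ℝ))) := by
          have hcn : (0:ℝ) ≤ (r/2) ^ (-a) := Real.rpow_nonneg (by linarith) _
          simp_rw [ENNReal.ofReal_mul hcn]
          exact lintegral_const_mul' _ _ ENNReal.ofReal_ne_top
      _ ≤ ENNReal.ofReal ((r/2)^(-a)) * (rieszK d (a/2) * ENNReal.ofReal (r ^ (a/2))) :=
          mul_le_mul_right (riesz_ball hd (half_pos ha) (by linarith) y hr) _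
      _ = rieszK d (a/2) * ENNReal.ofReal ((r/2)^(-a) * r^(a/2)) := by
          rw [ENNReal.ofReal_mul (Real.rpow_nonneg (by linarith) _)]; ring
      _ = rieszK d (a/2) * ENNReal.ofReal ((2:ℝ)^a) * ENNReal.ofReal (r ^ (-(a/2))) := by
          rw [hid1, ENNReal.ofReal_mul (by positivity), mul_assoc]
  -- piece 2
  have hP2 : ∫⁻ z in H ∩ (closedBall y r)ᶜ, F z ≤
      rieszK d (a/2) * ENNReal.ofReal (r ^ (-(a/2))) := by
    have hpt : ∀ z ∈ H ∩ (closedBall y r)ᶜ,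
        F z ≤ ENNReal.ofReal (‖z - y‖ ^ (-(a/2) - (d:ℝ))) := by
      rintro z ⟨hzH, hzB⟩
      have hlt : r < ‖z - y‖ := by
        have := mem_closedBall_iff_norm.not.mp hzB
        push_neg at this
        exact this
      have hzy : 0 < ‖z - y‖ := hr.trans hlt
      have h2 : ‖z - w‖ ^ (-a) ≤ ‖z - y‖ ^ (-a) :=
        Real.rpow_le_rpow_of_nonpos hzy hzH (by linarith)
      refine ENNReal.ofReal_le_ofReal ?_
      rw [norm_sub_rev y z]
      calc ‖z - y‖ ^ (a/2 - (d:ℝ)) * ‖z - w‖ ^ (-a)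
          ≤ ‖z - y‖ ^ (a/2 - (d:ℝ)) * ‖z - y‖ ^ (-a) :=
            mul_le_mul_of_nonneg_left h2 (Real.rpow_nonneg (norm_nonneg _) _)
        _ = ‖z - y‖ ^ (-(a/2) - (d:ℝ)) := by
            rw [← Real.rpow_add hzy, show a/2 - (d:ℝ) + -a = -(a/2) - (d:ℝ) by ring]
    calc ∫⁻ z in H ∩ (closedBall y r)ᶜ, F z
        ≤ ∫⁻ z in H ∩ (closedBall y r)ᶜ, ENNReal.ofReal (‖z - y‖ ^ (-(a/2) - (d:ℝ))) :=
          setLIntegral_mono' (hHmeas.inter measurableSet_closedBall.compl) hpt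
      _ ≤ ∫⁻ z in (closedBall y r)ᶜ, ENNReal.ofReal (‖z - y‖ ^ (-(a/2) - (d:ℝ))) :=
          lintegral_mono_set Set.inter_subset_right
      _ ≤ rieszK d (a/2) * ENNReal.ofReal (r ^ (-(a/2))) := riesz_ext (half_pos ha) y hr
  -- piece 3
  have hP3 : ∫⁻ z in Hᶜ ∩ closedBall w r, F z ≤
      rieszK d ((d:ℝ)-a) * ENNReal.ofReal ((2:ℝ)^((d:ℝ)-a/2)) *
        ENNReal.ofReal (r ^ (-(a/2))) := by
    have hpt : ∀ z ∈ Hᶜ ∩ closedBall w r,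
        F z ≤ ENNReal.ofReal ((r/2)^(a/2 - (d:ℝ)) * ‖z - w‖ ^ (-a)) := by
      rintro z ⟨hzH, _⟩
      have hzH' : ‖z - w‖ < ‖z - y‖ := by
        have : ¬ (‖z - y‖ ≤ ‖z - w‖) := hzH
        push_neg at this
        exact this
      have htri := dist_triangle y z w
      rw [dist_eq_norm, dist_eq_norm, dist_eq_norm] at htri
      have hrev := norm_sub_rev y z
      have h1 : r/2 ≤ ‖z - y‖ := by rw [hrdef]; linarith
      have h2 : ‖z - y‖ ^ (a/2 - (d:ℝ)) ≤ (r/2) ^ (a/2 - (d:ℝ)) :=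
        Real.rpow_le_rpow_of_nonpos (by linarith) h1 (by linarith)
      refine ENNReal.ofReal_le_ofReal ?_
      rw [norm_sub_rev y z]
      exact mul_le_mul_of_nonneg_right h2 (Real.rpow_nonneg (norm_nonneg _) _)
    have hball := riesz_ball hd (q := (d:ℝ) - a) (by linarith) (by linarith) w hr
    rw [show ((d:ℝ)-a) - (d:ℝ) = -a by ring] at hball
    have hid3 : (r/2)^(a/2-(d:ℝ)) * r^((d:ℝ)-a) = (2:ℝ)^((d:ℝ)-a/2) * r^(-(a/2)) := by
      have h2b : ((2:ℝ)⁻¹) ^ (a/2-(d:ℝ)) = (2:ℝ)^((d:ℝ)-a/2) := by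
        rw [Real.inv_rpow (by norm_num), ← Real.rpow_neg (by norm_num)]
        congr 1; ring
      rw [show r/2 = r * 2⁻¹ by ring, Real.mul_rpow hr.le (by norm_num), h2b,
        mul_right_comm, ← Real.rpow_add hr,
        show a/2-(d:ℝ)+((d:ℝ)-a) = -(a/2) by ring, mul_comm]
    calc ∫⁻ z in Hᶜ ∩ closedBall w r, F z
        ≤ ∫⁻ z in Hᶜ ∩ closedBall w r,
            ENNReal.ofReal ((r/2)^(a/2 - (d:ℝ)) * ‖z - w‖ ^ (-a)) :=
          setLIntegral_mono' (hHmeas.compl.inter measurableSet_closedBall) hpt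
      _ ≤ ∫⁻ z in closedBall w r, ENNReal.ofReal ((r/2)^(a/2 - (d:ℝ)) * ‖z - w‖ ^ (-a)) :=
          lintegral_mono_set Set.inter_subset_right
      _ = ENNReal.ofReal ((r/2)^(a/2 - (d:ℝ))) *
            ∫⁻ z in closedBall w r, ENNReal.ofReal (‖z - w‖ ^ (-a)) := by
          have hcn : (0:ℝ) ≤ (r/2) ^ (a/2 - (d:ℝ)) := Real.rpow_nonneg (by linarith) _
          simp_rw [ENNReal.ofReal_mul hcn]
          exact lintegral_const_mul' _ _ ENNReal.ofReal_ne_top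
      _ ≤ ENNReal.ofReal ((r/2)^(a/2 - (d:ℝ))) *
            (rieszK d ((d:ℝ)-a) * ENNReal.ofReal (r ^ ((d:ℝ)-a))) :=
          mul_le_mul_right hball _
      _ = rieszK d ((d:ℝ)-a) * ENNReal.ofReal ((r/2)^(a/2-(d:ℝ)) * r^((d:ℝ)-a)) := by
          rw [ENNReal.ofReal_mul (Real.rpow_nonneg (by linarith) _)]; ring
      _ = rieszK d ((d:ℝ)-a) * ENNReal.ofReal ((2:ℝ)^((d:ℝ)-a/2)) *
            ENNReal.ofReal (r ^ (-(a/2))) := by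
          rw [hid3, ENNReal.ofReal_mul (by positivity), mul_assoc]
  -- piece 4
  have hP4 : ∫⁻ z in Hᶜ ∩ (closedBall w r)ᶜ, F z ≤
      rieszK d (a/2) * ENNReal.ofReal (r ^ (-(a/2))) := by
    have hpt : ∀ z ∈ Hᶜ ∩ (closedBall w r)ᶜ,
        F z ≤ ENNReal.ofReal (‖z - w‖ ^ (-(a/2) - (d:ℝ))) := by
      rintro z ⟨hzH, hzB⟩
      have hzH' : ‖z - w‖ < ‖z - y‖ := by
        have : ¬ (‖z - y‖ ≤ ‖z - w‖) := hzH
        push_neg at this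
        exact this
      have hlt : r < ‖z - w‖ := by
        have := mem_closedBall_iff_norm.not.mp hzB
        push_neg at this
        exact this
      have hzw : 0 < ‖z - w‖ := hr.trans hlt
      have h2 : ‖z - y‖ ^ (a/2 - (d:ℝ)) ≤ ‖z - w‖ ^ (a/2 - (d:ℝ)) :=
        Real.rpow_le_rpow_of_nonpos hzw hzH'.le (by linarith)
      refine ENNReal.ofReal_le_ofReal ?_
      rw [norm_sub_rev y z]
      calc ‖z - y‖ ^ (a/2 - (d:ℝ)) * ‖z - w‖ ^ (-a)
          ≤ ‖z - w‖ ^ (a/2 - (d:ℝ)) * ‖z - w‖ ^ (-a) :=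
            mul_le_mul_of_nonneg_right h2 (Real.rpow_nonneg (norm_nonneg _) _)
        _ = ‖z - w‖ ^ (-(a/2) - (d:ℝ)) := by
            rw [← Real.rpow_add hzw, show a/2 - (d:ℝ) + -a = -(a/2) - (d:ℝ) by ring]
    calc ∫⁻ z in Hᶜ ∩ (closedBall w r)ᶜ, F z
        ≤ ∫⁻ z in Hᶜ ∩ (closedBall w r)ᶜ, ENNReal.ofReal (‖z - w‖ ^ (-(a/2) - (d:ℝ))) :=
          setLIntegral_mono' (hHmeas.compl.inter measurableSet_closedBall.compl) hpt
      _ ≤ ∫⁻ z in (closedBall w r)ᶜ, ENNReal.ofReal (‖z - w‖ ^ (-(a/2) - (d:ℝ))) :=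
          lintegral_mono_set Set.inter_subset_right
      _ ≤ rieszK d (a/2) * ENNReal.ofReal (r ^ (-(a/2))) := riesz_ext (half_pos ha) w hr
  calc ∫⁻ z in D, F z
      ≤ ∫⁻ z in (H ∩ closedBall y r ∪ H ∩ (closedBall y r)ᶜ) ∪
          (Hᶜ ∩ closedBall w r ∪ Hᶜ ∩ (closedBall w r)ᶜ), F z := lintegral_mono_set cover
    _ ≤ (∫⁻ z in H ∩ closedBall y r ∪ H ∩ (closedBall y r)ᶜ, F z) +
          ∫⁻ z in Hᶜ ∩ closedBall w r ∪ Hᶜ ∩ (closedBall w r)ᶜ, F z :=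
        lintegral_union_le _ _ _
    _ ≤ ((∫⁻ z in H ∩ closedBall y r, F z) + ∫⁻ z in H ∩ (closedBall y r)ᶜ, F z) +
          ((∫⁻ z in Hᶜ ∩ closedBall w r, F z) + ∫⁻ z in Hᶜ ∩ (closedBall w r)ᶜ, F z) :=
        add_le_add (lintegral_union_le _ _ _) (lintegral_union_le _ _ _)
    _ ≤ (rieszK d (a/2) * ENNReal.ofReal ((2:ℝ)^a) * ENNReal.ofReal (r ^ (-(a/2))) +
          rieszK d (a/2) * ENNReal.ofReal (r ^ (-(a/2)))) +
          (rieszK d ((d:ℝ)-a) * ENNReal.ofReal ((2:ℝ)^((d:ℝ)-a/2)) *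
              ENNReal.ofReal (r ^ (-(a/2))) +
            rieszK d (a/2) * ENNReal.ofReal (r ^ (-(a/2)))) :=
        add_le_add (add_le_add hP1 hP2) (add_le_add hP3 hP4)
    _ = rieszC1 d a * ENNReal.ofReal (r ^ (-(a/2))) := by
        rw [rieszC1]; ring

lemma outer_comp (hd : 1 ≤ d) {a : ℝ} (ha : 0 < a) (had : a < (d:ℝ)) (D : Set (E d))
    (x y : E d) {R : ℝ} (hR : 0 < R)
    (hDy : D ⊆ closedBall y R) (hDx : D ⊆ closedBall x R) :
    ∫⁻ w in D, ENNReal.ofReal (‖y - w‖ ^ (-(a/2)) * ‖w - x‖ ^ (a - (d:ℝ))) ≤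
      (rieszK d (a/2) + rieszK d (a/2)) * ENNReal.ofReal (R ^ (a/2)) := by
  set G : (E d) → ℝ≥0∞ :=
    fun w => ENNReal.ofReal (‖y - w‖ ^ (-(a/2)) * ‖w - x‖ ^ (a - (d:ℝ))) with hG
  set H : Set (E d) := {w | ‖w - y‖ ≤ ‖w - x‖} with hH
  have hHmeas : MeasurableSet H :=
    measurableSet_le ((measurable_id.sub_const y).norm) ((measurable_id.sub_const x).norm)
  have cover : D ⊆ (H ∩ closedBall y R) ∪ (Hᶜ ∩ closedBall x R) := by
    intro w hw
    by_cases h1 : w ∈ H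
    · exact Or.inl ⟨h1, hDy hw⟩
    · exact Or.inr ⟨h1, hDx hw⟩
  have hP1 : ∫⁻ w in H ∩ closedBall y R, G w ≤
      rieszK d (a/2) * ENNReal.ofReal (R ^ (a/2)) := by
    have hpt : ∀ w ∈ H ∩ closedBall y R,
        G w ≤ ENNReal.ofReal (‖w - y‖ ^ (a/2 - (d:ℝ))) := by
      rintro w ⟨hwH, _⟩
      rcases eq_or_ne w y with h | h
      · subst h
        simp only [hG, sub_self, norm_zero]
        rw [Real.zero_rpow (ne_of_lt (show -(a/2) < 0 by linarith))]
        simp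
      · have hwy : 0 < ‖w - y‖ := by rw [norm_pos_iff, sub_ne_zero]; exact h
        have h2 : ‖w - x‖ ^ (a - (d:ℝ)) ≤ ‖w - y‖ ^ (a - (d:ℝ)) :=
          Real.rpow_le_rpow_of_nonpos hwy hwH (by linarith)
        refine ENNReal.ofReal_le_ofReal ?_
        rw [norm_sub_rev y w]
        calc ‖w - y‖ ^ (-(a/2)) * ‖w - x‖ ^ (a - (d:ℝ))
            ≤ ‖w - y‖ ^ (-(a/2)) * ‖w - y‖ ^ (a - (d:ℝ)) :=
              mul_le_mul_of_nonneg_left h2 (Real.rpow_nonneg (norm_nonneg _) _)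
          _ = ‖w - y‖ ^ (a/2 - (d:ℝ)) := by
              rw [← Real.rpow_add hwy, show -(a/2) + (a - (d:ℝ)) = a/2 - (d:ℝ) by ring]
    calc ∫⁻ w in H ∩ closedBall y R, G w
        ≤ ∫⁻ w in H ∩ closedBall y R, ENNReal.ofReal (‖w - y‖ ^ (a/2 - (d:ℝ))) :=
          setLIntegral_mono' (hHmeas.inter measurableSet_closedBall) hpt
      _ ≤ ∫⁻ w in closedBall y R, ENNReal.ofReal (‖w - y‖ ^ (a/2 - (d:ℝ))) :=
          lintegral_mono_set Set.inter_subset_right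
      _ ≤ rieszK d (a/2) * ENNReal.ofReal (R ^ (a/2)) :=
          riesz_ball hd (half_pos ha) (by linarith) y hR
  have hP2 : ∫⁻ w in Hᶜ ∩ closedBall x R, G w ≤
      rieszK d (a/2) * ENNReal.ofReal (R ^ (a/2)) := by
    have hpt : ∀ w ∈ Hᶜ ∩ closedBall x R,
        G w ≤ ENNReal.ofReal (‖w - x‖ ^ (a/2 - (d:ℝ))) := by
      rintro w ⟨hwH, _⟩
      have hwH' : ‖w - x‖ < ‖w - y‖ := by
        have : ¬ (‖w - y‖ ≤ ‖w - x‖) := hwH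
        push_neg at this
        exact this
      rcases eq_or_ne w x with h | h
      · subst h
        simp only [hG, sub_self, norm_zero]
        rw [Real.zero_rpow (ne_of_lt (show a - (d:ℝ) < 0 by linarith))]
        simp
      · have hwx : 0 < ‖w - x‖ := by rw [norm_pos_iff, sub_ne_zero]; exact h
        have h2 : ‖w - y‖ ^ (-(a/2)) ≤ ‖w - x‖ ^ (-(a/2)) :=
          Real.rpow_le_rpow_of_nonpos hwx hwH'.le (by linarith)
        refine ENNReal.ofReal_le_ofReal ?_
        rw [norm_sub_rev y w]
        calc ‖w - y‖ ^ (-(a/2)) * ‖w - x‖ ^ (a - (d:ℝ))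
            ≤ ‖w - x‖ ^ (-(a/2)) * ‖w - x‖ ^ (a - (d:ℝ)) :=
              mul_le_mul_of_nonneg_right h2 (Real.rpow_nonneg (norm_nonneg _) _)
          _ = ‖w - x‖ ^ (a/2 - (d:ℝ)) := by
              rw [← Real.rpow_add hwx, show -(a/2) + (a - (d:ℝ)) = a/2 - (d:ℝ) by ring]
    calc ∫⁻ w in Hᶜ ∩ closedBall x R, G w
        ≤ ∫⁻ w in Hᶜ ∩ closedBall x R, ENNReal.ofReal (‖w - x‖ ^ (a/2 - (d:ℝ))) :=
          setLIntegral_mono' (hHmeas.compl.inter measurableSet_closedBall) hpt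
      _ ≤ ∫⁻ w in closedBall x R, ENNReal.ofReal (‖w - x‖ ^ (a/2 - (d:ℝ))) :=
          lintegral_mono_set Set.inter_subset_right
      _ ≤ rieszK d (a/2) * ENNReal.ofReal (R ^ (a/2)) :=
          riesz_ball hd (half_pos ha) (by linarith) x hR
  calc ∫⁻ w in D, G w
      ≤ ∫⁻ w in (H ∩ closedBall y R) ∪ (Hᶜ ∩ closedBall x R), G w :=
        lintegral_mono_set cover
    _ ≤ (∫⁻ w in H ∩ closedBall y R, G w) + ∫⁻ w in Hᶜ ∩ closedBall x R, G w :=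
        lintegral_union_le _ _ _
    _ ≤ rieszK d (a/2) * ENNReal.ofReal (R ^ (a/2)) +
          rieszK d (a/2) * ENNReal.ofReal (R ^ (a/2)) := add_le_add hP1 hP2
    _ = (rieszK d (a/2) + rieszK d (a/2)) * ENNReal.ofReal (R ^ (a/2)) := (add_mul _ _ _).symm

/-- Lemma (Riesz-type double integral, case `a = b = -ϱ`, `0 < a < d`): there is a
constant `C = C(d,a)` such that for every nonempty bounded open `D ⊂ ℝ^d` and all
`x ≠ y` in `D`,
`∫_D ∫_D |y-z|^{a-d} |z-w|^{-a} |w-x|^{a-d} dz dw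
  ≤ C (diam D)^a (1 + log(diam D / |x-y|))`. -/
theorem double_riesz_integral_log_case (d : ℕ) (hd : 1 ≤ d) (a : ℝ)
    (ha : 0 < a) (had : a < d) :
    ∃ C : ℝ, 0 < C ∧
      ∀ D : Set (EuclideanSpace ℝ (Fin d)), D.Nonempty → IsOpen D →
        Bornology.IsBounded D →
        ∀ x ∈ D, ∀ y ∈ D, x ≠ y →
          (∫⁻ w in D, ∫⁻ z in D,
              ENNReal.ofReal (‖y - z‖ ^ (a - (d : ℝ)) * ‖z - w‖ ^ (-a) *
                ‖w - x‖ ^ (a - (d : ℝ)))) ≤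
            ENNReal.ofReal (C * diam D ^ a * (1 + Real.log (diam D / ‖x - y‖))) := by
  set M : ℝ≥0∞ := rieszC1 d a * (rieszK d (a/2) + rieszK d (a/2)) with hM
  have hMne : M ≠ ⊤ := by
    have h1 := rieszK_ne_top (d := d) (half_pos ha)
    exact ENNReal.mul_ne_top (rieszC1_ne_top ha had) (ENNReal.add_ne_top.mpr ⟨h1, h1⟩)
  refine ⟨M.toReal + 1, by positivity, ?_⟩
  intro D _ hDopen hDbd x hx y hy hxy
  set R := diam D with hRdef
  have hxyn : 0 < ‖x - y‖ := by rw [norm_pos_iff, sub_ne_zero]; exact hxy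
  have hxyR : ‖x - y‖ ≤ R := by
    rw [← dist_eq_norm]; exact dist_le_diam_of_mem hDbd hx hy
  have hR : 0 < R := lt_of_lt_of_le hxyn hxyR
  have hDy : D ⊆ closedBall y R := fun z hz =>
    mem_closedBall.mpr (dist_le_diam_of_mem hDbd hz hy)
  have hDx : D ⊆ closedBall x R := fun z hz =>
    mem_closedBall.mpr (dist_le_diam_of_mem hDbd hz hx)
  -- step 1 : inner integral bound, for every w
  have hinner : ∀ w : (E d),
      (∫⁻ z in D, ENNReal.ofReal (‖y - z‖ ^ (a - (d:ℝ)) * ‖z - w‖ ^ (-a) *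
        ‖w - x‖ ^ (a - (d:ℝ)))) ≤
      ENNReal.ofReal (R ^ (a/2) * ‖w - x‖ ^ (a - (d:ℝ))) *
        ∫⁻ z in D, ENNReal.ofReal (‖y - z‖ ^ (a/2 - (d:ℝ)) * ‖z - w‖ ^ (-a)) := by
    intro w
    have hpt : ∀ z ∈ D,
        ENNReal.ofReal (‖y - z‖ ^ (a - (d:ℝ)) * ‖z - w‖ ^ (-a) * ‖w - x‖ ^ (a - (d:ℝ))) ≤
        ENNReal.ofReal ((R ^ (a/2) * ‖w - x‖ ^ (a - (d:ℝ))) *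
          (‖y - z‖ ^ (a/2 - (d:ℝ)) * ‖z - w‖ ^ (-a))) := by
      intro z hz
      refine ENNReal.ofReal_le_ofReal ?_
      have hyzR : ‖y - z‖ ≤ R := by
        rw [← dist_eq_norm]; exact dist_le_diam_of_mem hDbd hy hz
      have key : ‖y - z‖ ^ (a - (d:ℝ)) ≤ R ^ (a/2) * ‖y - z‖ ^ (a/2 - (d:ℝ)) := by
        rcases eq_or_lt_of_le (norm_nonneg (y - z)) with h0 | hpos
        · rw [← h0, Real.zero_rpow (ne_of_lt (show a - (d:ℝ) < 0 by linarith)),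
            Real.zero_rpow (ne_of_lt (show a/2 - (d:ℝ) < 0 by linarith)), mul_zero]
        · rw [show a - (d:ℝ) = a/2 + (a/2 - (d:ℝ)) by ring, Real.rpow_add hpos]
          exact mul_le_mul_of_nonneg_right
            (Real.rpow_le_rpow (norm_nonneg _) hyzR (by linarith))
            (Real.rpow_nonneg (norm_nonneg _) _)
      have h5 : ‖y - z‖ ^ (a - (d:ℝ)) * ‖z - w‖ ^ (-a) ≤
          (R ^ (a/2) * ‖y - z‖ ^ (a/2 - (d:ℝ))) * ‖z - w‖ ^ (-a) :=
        mul_le_mul_of_nonneg_right key (Real.rpow_nonneg (norm_nonneg _) _)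
      calc ‖y - z‖ ^ (a - (d:ℝ)) * ‖z - w‖ ^ (-a) * ‖w - x‖ ^ (a - (d:ℝ))
          ≤ (R ^ (a/2) * ‖y - z‖ ^ (a/2 - (d:ℝ))) * ‖z - w‖ ^ (-a) *
              ‖w - x‖ ^ (a - (d:ℝ)) :=
            mul_le_mul_of_nonneg_right h5 (Real.rpow_nonneg (norm_nonneg _) _)
        _ = (R ^ (a/2) * ‖w - x‖ ^ (a - (d:ℝ))) *
              (‖y - z‖ ^ (a/2 - (d:ℝ)) * ‖z - w‖ ^ (-a)) := by ring
    have hcn : (0:ℝ) ≤ R ^ (a/2) * ‖w - x‖ ^ (a - (d:ℝ)) := by positivity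
    calc (∫⁻ z in D, ENNReal.ofReal (‖y - z‖ ^ (a - (d:ℝ)) * ‖z - w‖ ^ (-a) *
            ‖w - x‖ ^ (a - (d:ℝ))))
        ≤ ∫⁻ z in D, ENNReal.ofReal ((R ^ (a/2) * ‖w - x‖ ^ (a - (d:ℝ))) *
            (‖y - z‖ ^ (a/2 - (d:ℝ)) * ‖z - w‖ ^ (-a))) :=
          setLIntegral_mono' hDopen.measurableSet hpt
      _ = ENNReal.ofReal (R ^ (a/2) * ‖w - x‖ ^ (a - (d:ℝ))) *
            ∫⁻ z in D, ENNReal.ofReal (‖y - z‖ ^ (a/2 - (d:ℝ)) * ‖z - w‖ ^ (-a)) := by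
          simp_rw [ENNReal.ofReal_mul hcn]
          exact lintegral_const_mul' _ _ ENNReal.ofReal_ne_top
  -- a.e. bound for outer integrand
  have hy0 : (volume.restrict D) {y} = 0 :=
    le_antisymm (le_trans (Measure.restrict_apply_le _ _)
      (volume_singleton_eq_zero hd y).le) (by simp)
  have hae : ∀ᵐ w ∂(volume.restrict D), w ≠ y := by
    rw [ae_iff]
    convert hy0 using 2
    ext w
    simp
  have hstep2 : (∫⁻ w in D, ∫⁻ z in D,
      ENNReal.ofReal (‖y - z‖ ^ (a - (d:ℝ)) * ‖z - w‖ ^ (-a) *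
        ‖w - x‖ ^ (a - (d:ℝ)))) ≤
      ∫⁻ w in D, (ENNReal.ofReal (R ^ (a/2)) * rieszC1 d a) *
        ENNReal.ofReal (‖y - w‖ ^ (-(a/2)) * ‖w - x‖ ^ (a - (d:ℝ))) := by
    refine lintegral_mono_ae (hae.mono fun w hw => ?_)
    refine (hinner w).trans ?_
    have h6 := inner_comp hd ha had D y w (Ne.symm hw)
    calc ENNReal.ofReal (R ^ (a/2) * ‖w - x‖ ^ (a - (d:ℝ))) *
          ∫⁻ z in D, ENNReal.ofReal (‖y - z‖ ^ (a/2 - (d:ℝ)) * ‖z - w‖ ^ (-a))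
        ≤ ENNReal.ofReal (R ^ (a/2) * ‖w - x‖ ^ (a - (d:ℝ))) *
            (rieszC1 d a * ENNReal.ofReal (‖y - w‖ ^ (-(a/2)))) :=
          mul_le_mul_right h6 _
      _ = (ENNReal.ofReal (R ^ (a/2)) * rieszC1 d a) *
            ENNReal.ofReal (‖y - w‖ ^ (-(a/2)) * ‖w - x‖ ^ (a - (d:ℝ))) := by
          rw [ENNReal.ofReal_mul (Real.rpow_nonneg diam_nonneg _),
            ENNReal.ofReal_mul (Real.rpow_nonneg (norm_nonneg _) _)]
          ring
  have hconst_ne : (ENNReal.ofReal (R ^ (a/2)) * rieszC1 d a) ≠ ⊤ :=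
    ENNReal.mul_ne_top ENNReal.ofReal_ne_top (rieszC1_ne_top ha had)
  have hstep3 : (∫⁻ w in D, (ENNReal.ofReal (R ^ (a/2)) * rieszC1 d a) *
        ENNReal.ofReal (‖y - w‖ ^ (-(a/2)) * ‖w - x‖ ^ (a - (d:ℝ)))) ≤
      (ENNReal.ofReal (R ^ (a/2)) * rieszC1 d a) *
        ((rieszK d (a/2) + rieszK d (a/2)) * ENNReal.ofReal (R ^ (a/2))) := by
    rw [lintegral_const_mul' _ _ hconst_ne]
    exact mul_le_mul_right (outer_comp hd ha had D x y hR hDy hDx) _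
  have hRa : ENNReal.ofReal (R ^ (a/2)) * ENNReal.ofReal (R ^ (a/2)) =
      ENNReal.ofReal (R ^ a) := by
    rw [← ENNReal.ofReal_mul (Real.rpow_nonneg diam_nonneg _), ← Real.rpow_add hR,
      show a/2 + a/2 = a by ring]
  have hfinal : (∫⁻ w in D, ∫⁻ z in D,
      ENNReal.ofReal (‖y - z‖ ^ (a - (d:ℝ)) * ‖z - w‖ ^ (-a) *
        ‖w - x‖ ^ (a - (d:ℝ)))) ≤ M * ENNReal.ofReal (R ^ a) := by
    refine (hstep2.trans hstep3).trans (le_of_eq ?_)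
    rw [← hRa, hM]
    ring
  refine hfinal.trans ?_
  -- final real comparison
  have hL : (0:ℝ) ≤ Real.log (R / ‖x - y‖) :=
    Real.log_nonneg ((one_le_div hxyn).mpr hxyR)
  have hRa0 : (0:ℝ) ≤ R ^ a := Real.rpow_nonneg diam_nonneg _
  calc M * ENNReal.ofReal (R ^ a)
      = ENNReal.ofReal M.toReal * ENNReal.ofReal (R ^ a) := by
        rw [ENNReal.ofReal_toReal hMne]
    _ = ENNReal.ofReal (M.toReal * R ^ a) := by
        rw [← ENNReal.ofReal_mul ENNReal.toReal_nonneg]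
    _ ≤ ENNReal.ofReal ((M.toReal + 1) * R ^ a * (1 + Real.log (R / ‖x - y‖))) := by
        refine ENNReal.ofReal_le_ofReal ?_
        have h7 : M.toReal * R ^ a ≤ (M.toReal + 1) * R ^ a :=
          mul_le_mul_of_nonneg_right (by linarith) hRa0
        have h8 : (M.toReal + 1) * R ^ a ≤ (M.toReal + 1) * R ^ a *
            (1 + Real.log (R / ‖x - y‖)) :=
          le_mul_of_one_le_right (by positivity) (by linarith)
        linarith
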